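/- arXiv:2201.04553 — 6 statements merged into one kernel-verified Lean document; each statement's English description precedes it below -/
import Mathlib

section
/- Let f be a CAR family on H with parity operator P, and assume f is full. Let j : Fin N and let W be a unitary on H such that W * P = P * W, W * f j = f j * W, and W * Adjoint(f j) = Adjoint(f j) * W. Then W belongs to the subalgebra Algebra.adjoin ℂ {f i, Adjoint(f i) : i ≠ j}. -/
open LinearMap

set_option maxHeartbeats 2000000 in
/-- Key step in the backward direction of Theorem 1: a parity-superselected
unitary commuting with the mode-`j` creation and annihilation operators is
local on the complementary modes. -/
theorem stmt_1 {H : Type*} [NormedAddCommGroup H] [InnerProductSpace ℂ H]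
    [FiniteDimensional ℂ H] [Nontrivial H] {N : ℕ}
    (f : Fin N → (H →ₗ[ℂ] H))
    (hCAR₁ : ∀ i j, f i * f j + f j * f i = 0)
    (hCAR₂ : ∀ i j, f i * adjoint (f j) + adjoint (f j) * f i
      = if i = j then 1 else 0)
    (P : H →ₗ[ℂ] H)
    (hPuni₁ : adjoint P * P = 1) (hPuni₂ : P * adjoint P = 1)
    (hPsq : P * P = 1)
    (hPanti : ∀ i, P * f i = -(f i * P))
    (hfull : Algebra.adjoin ℂ
      {A : H →ₗ[ℂ] H | ∃ i : Fin N, A = f i ∨ A = adjoint (f i)} = ⊤)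
    (j : Fin N) (W : H →ₗ[ℂ] H)
    (hW₁ : adjoint W * W = 1) (hW₂ : W * adjoint W = 1)
    (hWP : W * P = P * W)
    (hWf : W * f j = f j * W)
    (hWfd : W * adjoint (f j) = adjoint (f j) * W) :
    W ∈ Algebra.adjoin ℂ
      {A : H →ₗ[ℂ] H | ∃ i : Fin N, i ≠ j ∧ (A = f i ∨ A = adjoint (f i))} := by
  classical
  set B := Algebra.adjoin ℂ
      {A : H →ₗ[ℂ] H | ∃ i : Fin N, i ≠ j ∧ (A = f i ∨ A = adjoint (f i))} with hB
  -- abbreviations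
  have hadj_mul : ∀ A C : H →ₗ[ℂ] H, adjoint (A * C) = adjoint C * adjoint A := by
    intro A C
    rw [← LinearMap.star_eq_adjoint, ← LinearMap.star_eq_adjoint,
      ← LinearMap.star_eq_adjoint, star_mul]
  -- P is self-adjoint
  have hPsa : adjoint P = P := by
    calc adjoint P = adjoint P * (P * P) := by rw [hPsq, mul_one]
    _ = (adjoint P * P) * P := by rw [mul_assoc]
    _ = P := by rw [hPuni₁, one_mul]
  -- squares vanish
  have hff : ∀ k, f k * f k = 0 := by
    intro k
    have h2 : (2 : ℂ) • (f k * f k) = 0 := by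
      rw [two_smul]; exact hCAR₁ k k
    have := smul_eq_zero.mp h2
    simpa using this
  have hdd : ∀ k, adjoint (f k) * adjoint (f k) = 0 := by
    intro k
    have := congrArg adjoint (hff k)
    rwa [hadj_mul, map_zero] at this
  have hsumk : ∀ k, f k * adjoint (f k) + adjoint (f k) * f k = 1 := by
    intro k; simpa using hCAR₂ k k
  -- anticommutation relations, as equations
  have AC_ff : ∀ i k, f i * f k = -(f k * f i) :=
    fun i k => eq_neg_of_add_eq_zero_left (hCAR₁ i k)
  have AC_fad : ∀ i k, i ≠ k → f i * adjoint (f k) = -(adjoint (f k) * f i) := by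
    intro i k hik
    have := hCAR₂ i k
    rw [if_neg hik] at this
    exact eq_neg_of_add_eq_zero_left this
  have AC_adf : ∀ i k, i ≠ k → adjoint (f i) * f k = -(f k * adjoint (f i)) := by
    intro i k hik
    have := hCAR₂ k i
    rw [if_neg (Ne.symm hik)] at this
    exact eq_neg_of_add_eq_zero_right this
  have AC_adad : ∀ i k, adjoint (f i) * adjoint (f k) = -(adjoint (f k) * adjoint (f i)) := by
    intro i k
    have := congrArg adjoint (hCAR₁ k i)
    rw [map_add, hadj_mul, hadj_mul, map_zero] at this
    exact eq_neg_of_add_eq_zero_left this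
  have AC_Pf : ∀ i, f i * P = -(P * f i) := by
    intro i; rw [hPanti i, neg_neg]
  have hPanti' : ∀ i, P * adjoint (f i) = -(adjoint (f i) * P) := by
    intro i
    have := congrArg adjoint (hPanti i)
    rw [hadj_mul, map_neg, hadj_mul, hPsa] at this
    -- this : adjoint (f i) * P = -(P * adjoint (f i))
    rw [this, neg_neg]
  have AC_Pad : ∀ i, adjoint (f i) * P = -(P * adjoint (f i)) := by
    intro i; rw [hPanti' i, neg_neg]
  -- product of two elements anticommuting with g commutes with g
  have L1 : ∀ g u v : H →ₗ[ℂ] H, g * u = -(u * g) → g * v = -(v * g) →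
      (u * v) * g = g * (u * v) := by
    intro g u v h1 h2
    have h1' : u * g = -(g * u) := by rw [h1, neg_neg]
    have h2' : v * g = -(g * v) := by rw [h2, neg_neg]
    rw [mul_assoc, h2', mul_neg, ← mul_assoc, h1', neg_mul, neg_neg, mul_assoc]
  -- number operators and sign factors
  set nc : Fin N → (H →ₗ[ℂ] H) := fun k => adjoint (f k) * f k with hnc
  set d : Fin N → (H →ₗ[ℂ] H) := fun k => 1 - (nc k + nc k) with hd
  -- commutation of nc k with things anticommuting with f k and adjoint (f k)
  have hnc_comm : ∀ (k : Fin N) (g : H →ₗ[ℂ] H),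
      g * f k = -(f k * g) → g * adjoint (f k) = -(adjoint (f k) * g) →
      nc k * g = g * nc k := by
    intro k g h1 h2
    exact L1 g (adjoint (f k)) (f k) h2 h1
  have hd_comm : ∀ (k : Fin N) (g : H →ₗ[ℂ] H),
      g * f k = -(f k * g) → g * adjoint (f k) = -(adjoint (f k) * g) →
      Commute (d k) g := by
    intro k g h1 h2
    have h := hnc_comm k g h1 h2
    have hc : Commute (nc k) g := h
    exact (Commute.one_left g).sub_left (hc.add_left hc)
  -- basic facts about d
  have hncf : ∀ k, nc k * f k = 0 := by
    intro k
    show (adjoint (f k) * f k) * f k = 0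
    rw [mul_assoc, hff, mul_zero]
  have hfnc : ∀ k, f k * nc k = f k := by
    intro k
    show f k * (adjoint (f k) * f k) = f k
    have h : f k * adjoint (f k) = 1 - adjoint (f k) * f k :=
      eq_sub_of_add_eq (hsumk k)
    rw [← mul_assoc, h, sub_mul, one_mul, mul_assoc, hff, mul_zero, sub_zero]
  have hncad : ∀ k, nc k * adjoint (f k) = adjoint (f k) := by
    intro k
    show (adjoint (f k) * f k) * adjoint (f k) = adjoint (f k)
    have h : f k * adjoint (f k) = 1 - adjoint (f k) * f k :=
      eq_sub_of_add_eq (hsumk k)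
    rw [mul_assoc, h, mul_sub, mul_one, ← mul_assoc, hdd, zero_mul, sub_zero]
  have hadnc : ∀ k, adjoint (f k) * nc k = 0 := by
    intro k
    show adjoint (f k) * (adjoint (f k) * f k) = 0
    rw [← mul_assoc, hdd, zero_mul]
  have hdf : ∀ k, d k * f k = f k := by
    intro k
    show (1 - (nc k + nc k)) * f k = f k
    rw [sub_mul, one_mul, add_mul, hncf, add_zero, sub_zero]
  have hfd : ∀ k, f k * d k = -(f k) := by
    intro k
    show f k * (1 - (nc k + nc k)) = -(f k)
    rw [mul_sub, mul_one, mul_add, hfnc]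
    abel
  have hdad : ∀ k, d k * adjoint (f k) = -(adjoint (f k)) := by
    intro k
    show (1 - (nc k + nc k)) * adjoint (f k) = -(adjoint (f k))
    rw [sub_mul, one_mul, add_mul, hncad]
    abel
  have hadd : ∀ k, adjoint (f k) * d k = adjoint (f k) := by
    intro k
    show adjoint (f k) * (1 - (nc k + nc k)) = adjoint (f k)
    rw [mul_sub, mul_one, mul_add, hadnc, add_zero, sub_zero]
  have hncnc : ∀ k, nc k * nc k = nc k := by
    intro k
    show (adjoint (f k) * f k) * (adjoint (f k) * f k) = adjoint (f k) * f k
    have h : f k * adjoint (f k) = 1 - adjoint (f k) * f k :=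
      eq_sub_of_add_eq (hsumk k)
    rw [mul_assoc, ← mul_assoc (f k), h, sub_mul, one_mul, mul_assoc, hff,
      mul_zero, sub_zero]
  have hdd1 : ∀ k, d k * d k = 1 := by
    intro k
    show (1 - (nc k + nc k)) * (1 - (nc k + nc k)) = 1
    have hmm : (nc k + nc k) * (nc k + nc k) = (nc k + nc k) + (nc k + nc k) := by
      rw [add_mul, mul_add, hncnc]
    rw [sub_mul, one_mul, mul_sub, mul_one, hmm]
    abel
  -- pairwise commutation of the d's
  have hd_pair : ∀ k m : Fin N, Commute (d k) (d m) := by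
    intro k m
    by_cases hkm : k = m
    · subst hkm; exact Commute.refl _
    · have h1 : nc m * f k = f k * nc m :=
        hnc_comm m (f k) (AC_ff k m) (AC_fad k m hkm)
      have h2 : nc m * adjoint (f k) = adjoint (f k) * nc m :=
        hnc_comm m (adjoint (f k)) (AC_adf k m hkm) (AC_adad k m)
      have hx : Commute (nc m) (nc k) := by
        show nc m * nc k = nc k * nc m
        show nc m * (adjoint (f k) * f k) = (adjoint (f k) * f k) * nc m
        rw [← mul_assoc, h2, mul_assoc, h1, mul_assoc]
      have hc : Commute (d m) (nc k) :=
        (Commute.one_left (nc k)).sub_left (hx.add_left hx)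
      exact ((Commute.one_right (d m)).sub_right (hc.add_right hc)).symm
  -- the Jordan-Wigner sign operator on modes ≠ j
  have hpair : ((Finset.univ.erase j : Finset (Fin N)) : Set (Fin N)).Pairwise
      (Function.onFun Commute d) := fun k _ m _ _ => hd_pair k m
  set S : H →ₗ[ℂ] H := (Finset.univ.erase j).noncommProd d hpair with hS
  -- S is in B
  have hSB : S ∈ B := by
    apply Submonoid.noncommProd_mem B.toSubmonoid
    intro k hk
    have hkj : k ≠ j := (Finset.mem_erase.mp hk).1
    have h1 : f k ∈ B := Algebra.subset_adjoin ⟨k, hkj, Or.inl rfl⟩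
    have h2 : adjoint (f k) ∈ B := Algebra.subset_adjoin ⟨k, hkj, Or.inr rfl⟩
    have h3 : nc k ∈ B := mul_mem h2 h1
    show d k ∈ B
    exact sub_mem (one_mem B) (add_mem h3 h3)
  -- S commutes with f j, adjoint (f j), P
  have hSfj : Commute (f j) S := by
    apply Finset.noncommProd_commute
    intro k hk
    have hkj : k ≠ j := (Finset.mem_erase.mp hk).1
    exact (hd_comm k (f j) (AC_ff j k) (AC_fad j k (Ne.symm hkj))).symm
  have hSadj : Commute (adjoint (f j)) S := by
    apply Finset.noncommProd_commute
    intro k hk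
    have hkj : k ≠ j := (Finset.mem_erase.mp hk).1
    exact (hd_comm k (adjoint (f j)) (AC_adf j k (Ne.symm hkj)) (AC_adad j k)).symm
  have hSP : Commute P S := by
    apply Finset.noncommProd_commute
    intro k hk
    exact (hd_comm k P (hPanti k) (hPanti' k)).symm
  -- S squares to 1
  have hSS : S * S = 1 := by
    have hdist := Finset.noncommProd_mul_distrib d d hpair hpair
      (fun k _ m _ _ => hd_pair k m)
    have hone : (Finset.univ.erase j).noncommProd (d * d)
        (Finset.noncommProd_mul_distrib_aux hpair hpair
          (fun k _ m _ _ => hd_pair k m)) = 1 := by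
      rw [Finset.noncommProd_eq_pow_card _ _ _ 1
        (fun k _ => by simp [Pi.mul_apply, hdd1 k]), one_pow]
    rw [← hdist, hone]
  -- S anticommutes with f i and adjoint (f i) for i ≠ j
  have hSanti : ∀ i, i ≠ j → S * f i = -(f i * S) := by
    intro i hij
    have hmem : i ∈ Finset.univ.erase j := Finset.mem_erase.mpr ⟨hij, Finset.mem_univ i⟩
    have hsplit := Finset.mul_noncommProd_erase (Finset.univ.erase j) hmem d hpair
    rw [← hS] at hsplit
    set S' := ((Finset.univ.erase j).erase i).noncommProd d
      (fun k hk m hm hkm => hpair (Finset.mem_of_mem_erase hk)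
        (Finset.mem_of_mem_erase hm) hkm) with hS'
    have hcS' : Commute (f i) S' := by
      apply Finset.noncommProd_commute
      intro k hk
      have hki : k ≠ i := (Finset.mem_erase.mp hk).1
      exact (hd_comm k (f i) (AC_ff i k) (AC_fad i k (Ne.symm hki))).symm
    have h1 : S * f i = f i * S' := by
      rw [← hsplit, mul_assoc, ← hcS'.eq, ← mul_assoc, hdf]
    have h2 : f i * S = -(f i * S') := by
      rw [← hsplit, ← mul_assoc, hfd, neg_mul]
    rw [h1, h2, neg_neg]
  have hSanti' : ∀ i, i ≠ j → S * adjoint (f i) = -(adjoint (f i) * S) := by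
    intro i hij
    have hmem : i ∈ Finset.univ.erase j := Finset.mem_erase.mpr ⟨hij, Finset.mem_univ i⟩
    have hsplit := Finset.mul_noncommProd_erase (Finset.univ.erase j) hmem d hpair
    rw [← hS] at hsplit
    set S' := ((Finset.univ.erase j).erase i).noncommProd d
      (fun k hk m hm hkm => hpair (Finset.mem_of_mem_erase hk)
        (Finset.mem_of_mem_erase hm) hkm) with hS'
    have hcS' : Commute (adjoint (f i)) S' := by
      apply Finset.noncommProd_commute
      intro k hk
      have hki : k ≠ i := (Finset.mem_erase.mp hk).1
      exact (hd_comm k (adjoint (f i)) (AC_adf i k (Ne.symm hki)) (AC_adad i k)).symm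
    have h1 : S * adjoint (f i) = -(adjoint (f i)) * S' := by
      rw [← hsplit, mul_assoc, ← hcS'.eq, ← mul_assoc, hdad]
    have h2 : adjoint (f i) * S = adjoint (f i) * S' := by
      rw [← hsplit, ← mul_assoc, hadd]
    rw [h1, h2, neg_mul]
  -- the twisted matrix units
  set e11 : H →ₗ[ℂ] H := f j * adjoint (f j) with he11
  set e22 : H →ₗ[ℂ] H := adjoint (f j) * f j with he22
  set t12 : H →ₗ[ℂ] H := f j * S with ht12
  set t21 : H →ₗ[ℂ] H := S * adjoint (f j) with ht21
  set u12 : H →ₗ[ℂ] H := f j * P with hu12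
  set u21 : H →ₗ[ℂ] H := P * adjoint (f j) with hu21
  -- anything commuting with all generators of B commutes with all of B
  have hcent : ∀ x : H →ₗ[ℂ] H,
      (∀ i, i ≠ j → x * f i = f i * x) →
      (∀ i, i ≠ j → x * adjoint (f i) = adjoint (f i) * x) →
      ∀ b ∈ B, x * b = b * x := by
    intro x h1 h2 b hb
    induction hb using Algebra.adjoin_induction with
    | mem y hy =>
      obtain ⟨i, hij, hy⟩ := hy
      rcases hy with rfl | rfl
      · exact h1 i hij
      · exact h2 i hij
    | algebraMap r => exact (Algebra.commutes r x).symm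
    | add y z _ _ hy hz => rw [mul_add, add_mul, hy, hz]
    | mul y z _ _ hy hz =>
      rw [← mul_assoc, hy, mul_assoc, hz, ← mul_assoc]
  -- generators anticommuting with g, used to commute units past B
  have hu_comm : ∀ u v : H →ₗ[ℂ] H,
      (∀ i, i ≠ j → f i * u = -(u * f i) ∧ f i * v = -(v * f i)) →
      (∀ i, i ≠ j → adjoint (f i) * u = -(u * adjoint (f i)) ∧
        adjoint (f i) * v = -(v * adjoint (f i))) →
      ∀ b ∈ B, (u * v) * b = b * (u * v) := by
    intro u v h1 h2
    apply hcent
    · intro i hij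
      exact L1 (f i) u v (h1 i hij).1 (h1 i hij).2
    · intro i hij
      exact L1 (adjoint (f i)) u v (h2 i hij).1 (h2 i hij).2
  have flipAC : ∀ x y : H →ₗ[ℂ] H, x * y = -(y * x) → y * x = -(x * y) := by
    intro x y h; rw [h, neg_neg]
  have hBe11 : ∀ b ∈ B, e11 * b = b * e11 := by
    apply hu_comm
    · intro i hij
      exact ⟨AC_ff i j, AC_fad i j (fun h => hij h)⟩
    · intro i hij
      exact ⟨AC_adf i j (fun h => hij h), AC_adad i j⟩
  have hBe22 : ∀ b ∈ B, e22 * b = b * e22 := by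
    apply hu_comm
    · intro i hij
      exact ⟨AC_fad i j (fun h => hij h), AC_ff i j⟩
    · intro i hij
      exact ⟨AC_adad i j, AC_adf i j (fun h => hij h)⟩
  have hBt12 : ∀ b ∈ B, t12 * b = b * t12 := by
    apply hu_comm
    · intro i hij
      exact ⟨AC_ff i j, flipAC _ _ (hSanti i hij)⟩
    · intro i hij
      exact ⟨AC_adf i j (fun h => hij h), flipAC _ _ (hSanti' i hij)⟩
  have hBt21 : ∀ b ∈ B, t21 * b = b * t21 := by
    apply hu_comm
    · intro i hij
      exact ⟨flipAC _ _ (hSanti i hij), AC_fad i j (fun h => hij h)⟩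
    · intro i hij
      exact ⟨flipAC _ _ (hSanti' i hij), AC_adad i j⟩
  have hBu12 : ∀ b ∈ B, u12 * b = b * u12 := by
    apply hu_comm
    · intro i hij
      exact ⟨AC_ff i j, AC_Pf i⟩
    · intro i hij
      exact ⟨AC_adf i j (fun h => hij h), AC_Pad i⟩
  have hBu21 : ∀ b ∈ B, u21 * b = b * u21 := by
    apply hu_comm
    · intro i hij
      exact ⟨flipAC _ _ (hPanti i), AC_fad i j (fun h => hij h)⟩
    · intro i hij
      exact ⟨flipAC _ _ (hPanti' i), AC_adad i j⟩
  -- movement helpers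
  have haaX : ∀ x : H →ₗ[ℂ] H, f j * (f j * x) = 0 := by
    intro x; rw [← mul_assoc, hff, zero_mul]
  have hadadX : ∀ x : H →ₗ[ℂ] H, adjoint (f j) * (adjoint (f j) * x) = 0 := by
    intro x; rw [← mul_assoc, hdd, zero_mul]
  have hSSX : ∀ x : H →ₗ[ℂ] H, S * (S * x) = x := by
    intro x; rw [← mul_assoc, hSS, one_mul]
  have hSa' : ∀ x : H →ₗ[ℂ] H, S * (f j * x) = f j * (S * x) := by
    intro x; rw [← mul_assoc, ← hSfj.eq, mul_assoc]
  have hSad' : ∀ x : H →ₗ[ℂ] H, S * (adjoint (f j) * x) = adjoint (f j) * (S * x) := by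
    intro x; rw [← mul_assoc, ← hSadj.eq, mul_assoc]
  have k0 : (f j * adjoint (f j)) * f j = f j := by
    have h : f j * adjoint (f j) = 1 - adjoint (f j) * f j :=
      eq_sub_of_add_eq (hsumk j)
    rw [h, sub_mul, one_mul, mul_assoc, hff, mul_zero, sub_zero]
  have k0' : (adjoint (f j) * f j) * adjoint (f j) = adjoint (f j) := by
    have h : adjoint (f j) * f j = 1 - f j * adjoint (f j) :=
      eq_sub_of_add_eq' (hsumk j)
    rw [h, sub_mul, one_mul, mul_assoc, hdd, mul_zero, sub_zero]
  have k1' : ∀ x : H →ₗ[ℂ] H, f j * (adjoint (f j) * (f j * x)) = f j * x := by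
    intro x; rw [← mul_assoc, ← mul_assoc, k0]
  have k2' : ∀ x : H →ₗ[ℂ] H,
      adjoint (f j) * (f j * (adjoint (f j) * x)) = adjoint (f j) * x := by
    intro x; rw [← mul_assoc, ← mul_assoc, k0']
  have hPa' : ∀ x : H →ₗ[ℂ] H, P * (f j * x) = -(f j * (P * x)) := by
    intro x; rw [← mul_assoc, hPanti j, neg_mul, mul_assoc]
  have hPad' : ∀ x : H →ₗ[ℂ] H,
      P * (adjoint (f j) * x) = -(adjoint (f j) * (P * x)) := by
    intro x; rw [← mul_assoc, hPanti' j, neg_mul, mul_assoc]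
  have hPPX : ∀ x : H →ₗ[ℂ] H, P * (P * x) = x := by
    intro x; rw [← mul_assoc, hPsq, one_mul]
  -- multiplication table for the twisted matrix units
  have hunit : e11 + e22 = 1 := by rw [he11, he22]; exact hsumk j
  have T1 : e11 * e11 = e11 := by
    rw [he11, mul_assoc, k1']
  have T2 : e11 * t12 = t12 := by
    rw [he11, ht12, mul_assoc, k1']
  have T3 : e11 * t21 = 0 := by
    rw [he11, ht21, mul_assoc, ← hSad', hdd, mul_zero, mul_zero]
  have T4 : e11 * e22 = 0 := by
    rw [he11, he22, mul_assoc, hadadX, mul_zero]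
  have T5 : t12 * e11 = 0 := by
    rw [ht12, he11, mul_assoc, hSa', haaX]
  have T6 : t12 * t12 = 0 := by
    rw [ht12, mul_assoc, hSa', haaX]
  have T7 : t12 * t21 = e11 := by
    rw [ht12, ht21, he11, mul_assoc, hSSX]
  have T8 : t12 * e22 = t12 := by
    rw [ht12, he22, mul_assoc, hSad', ← hSfj.eq, k1']
  have T9 : t21 * e11 = t21 := by
    rw [ht21, he11, mul_assoc, ← mul_assoc (adjoint (f j)), k0']
  have T10 : t21 * t12 = e22 := by
    rw [ht21, ht12, he22, mul_assoc, hSad', hSa', hSS, mul_one]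
  have T11 : t21 * t21 = 0 := by
    rw [ht21, mul_assoc, ← hSad', hdd, mul_zero, mul_zero]
  have T12 : t21 * e22 = 0 := by
    rw [ht21, he22, mul_assoc, hadadX, mul_zero]
  have T13 : e22 * e11 = 0 := by
    rw [he22, he11, mul_assoc, haaX, mul_zero]
  have T14 : e22 * t12 = 0 := by
    rw [he22, ht12, mul_assoc, haaX, mul_zero]
  have T15 : e22 * t21 = t21 := by
    rw [he22, ht21, mul_assoc, ← hSa', ← hSad', ← mul_assoc (adjoint (f j)), k0']
  have T16 : e22 * e22 = e22 := by
    rw [he22, mul_assoc, k2']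
  -- the key rearrangement lemma
  have key : ∀ b c e e' : H →ₗ[ℂ] H, e * c = c * e →
      (b * e) * (c * e') = (b * c) * (e * e') := by
    intro b c e e' h
    rw [mul_assoc b e (c * e'), ← mul_assoc e c e', h, mul_assoc c e e',
      ← mul_assoc b c (e * e')]
  -- every operator has a B-coefficient matrix representation
  have hrep : ∀ x : H →ₗ[ℂ] H, ∃ b11 b12 b21 b22 : H →ₗ[ℂ] H,
      b11 ∈ B ∧ b12 ∈ B ∧ b21 ∈ B ∧ b22 ∈ B ∧
      x = b11 * e11 + b12 * t12 + b21 * t21 + b22 * e22 := by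
    intro x
    have hx : x ∈ Algebra.adjoin ℂ
        {A : H →ₗ[ℂ] H | ∃ i : Fin N, A = f i ∨ A = adjoint (f i)} := by
      rw [hfull]; exact Algebra.mem_top
    induction hx using Algebra.adjoin_induction with
    | mem y hy =>
      obtain ⟨i, hy⟩ := hy
      by_cases hij : i = j
      · subst hij
        rcases hy with rfl | rfl
        · refine ⟨0, S, 0, 0, zero_mem _, hSB, zero_mem _, zero_mem _, ?_⟩
          simp only [zero_mul, zero_add, add_zero]
          rw [ht12, hSa', hSS, mul_one]
        · refine ⟨0, 0, S, 0, zero_mem _, zero_mem _, hSB, zero_mem _, ?_⟩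
          simp only [zero_mul, zero_add, add_zero]
          rw [ht21, hSSX]
      · rcases hy with rfl | rfl
        · refine ⟨f i, 0, 0, f i, Algebra.subset_adjoin ⟨i, hij, Or.inl rfl⟩,
            zero_mem _, zero_mem _, Algebra.subset_adjoin ⟨i, hij, Or.inl rfl⟩, ?_⟩
          simp only [zero_mul, zero_add, add_zero]
          rw [← mul_add, hunit, mul_one]
        · refine ⟨adjoint (f i), 0, 0, adjoint (f i),
            Algebra.subset_adjoin ⟨i, hij, Or.inr rfl⟩,
            zero_mem _, zero_mem _, Algebra.subset_adjoin ⟨i, hij, Or.inr rfl⟩, ?_⟩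
          simp only [zero_mul, zero_add, add_zero]
          rw [← mul_add, hunit, mul_one]
    | algebraMap r =>
      refine ⟨algebraMap ℂ _ r, 0, 0, algebraMap ℂ _ r,
        algebraMap_mem _ r, zero_mem _, zero_mem _, algebraMap_mem _ r, ?_⟩
      simp only [zero_mul, zero_add, add_zero]
      rw [← mul_add, hunit, mul_one]
    | add y z _ _ hy hz =>
      obtain ⟨b11, b12, b21, b22, m11, m12, m21, m22, hby⟩ := hy
      obtain ⟨c11, c12, c21, c22, n11, n12, n21, n22, hcz⟩ := hz
      refine ⟨b11 + c11, b12 + c12, b21 + c21, b22 + c22,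
        add_mem m11 n11, add_mem m12 n12, add_mem m21 n21, add_mem m22 n22, ?_⟩
      rw [hby, hcz]
      noncomm_ring
    | mul y z _ _ hy hz =>
      obtain ⟨b11, b12, b21, b22, m11, m12, m21, m22, hby⟩ := hy
      obtain ⟨c11, c12, c21, c22, n11, n12, n21, n22, hcz⟩ := hz
      refine ⟨b11 * c11 + b12 * c21, b11 * c12 + b12 * c22,
        b21 * c11 + b22 * c21, b21 * c12 + b22 * c22,
        add_mem (mul_mem m11 n11) (mul_mem m12 n21),
        add_mem (mul_mem m11 n12) (mul_mem m12 n22),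
        add_mem (mul_mem m21 n11) (mul_mem m22 n21),
        add_mem (mul_mem m21 n12) (mul_mem m22 n22), ?_⟩
      rw [hby, hcz]
      simp only [mul_add, add_mul]
      rw [key b11 c11 e11 e11 (hBe11 c11 n11), key b11 c12 e11 t12 (hBe11 c12 n12),
        key b11 c21 e11 t21 (hBe11 c21 n21), key b11 c22 e11 e22 (hBe11 c22 n22),
        key b12 c11 t12 e11 (hBt12 c11 n11), key b12 c12 t12 t12 (hBt12 c12 n12),
        key b12 c21 t12 t21 (hBt12 c21 n21), key b12 c22 t12 e22 (hBt12 c22 n22),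
        key b21 c11 t21 e11 (hBt21 c11 n11), key b21 c12 t21 t12 (hBt21 c12 n12),
        key b21 c21 t21 t21 (hBt21 c21 n21), key b21 c22 t21 e22 (hBt21 c22 n22),
        key b22 c11 e22 e11 (hBe22 c11 n11), key b22 c12 e22 t12 (hBe22 c12 n12),
        key b22 c21 e22 t21 (hBe22 c21 n21), key b22 c22 e22 e22 (hBe22 c22 n22)]
      rw [T1, T2, T3, T4, T5, T6, T7, T8, T9, T10, T11, T12, T13, T14, T15, T16]
      simp only [mul_zero, add_zero, zero_add]
      noncomm_ring
  -- W commutes with e11, u12, u21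
  have hWe11 : W * e11 = e11 * W := by
    rw [he11, ← mul_assoc, hWf, mul_assoc, hWfd, ← mul_assoc]
  have hWu12 : W * u12 = u12 * W := by
    rw [hu12, ← mul_assoc, hWf, mul_assoc, hWP, ← mul_assoc]
  have hWu21 : W * u21 = u21 * W := by
    rw [hu21, ← mul_assoc, hWP, mul_assoc, hWfd, ← mul_assoc]
  have hU : u21 * u12 = e22 := by
    rw [hu21, hu12, he22, mul_assoc, hPad', hPa', hPsq, mul_one, mul_neg, neg_neg]
  -- compression of W by the P-twisted matrix units
  have hX1 : (e11 * W) * e11 + (u21 * W) * u12 = W := by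
    rw [← hWe11, ← hWu21, mul_assoc W e11 e11, mul_assoc W u21 u12, T1, hU, ← mul_add, hunit, mul_one]
  -- sandwich values on the twisted units
  have v1 : (e11 * e11) * e11 = e11 := by rw [T1, T1]
  have v2 : (e11 * t12) * e11 = 0 := by rw [T2, T5]
  have v3 : (e11 * t21) * e11 = 0 := by rw [T3, zero_mul]
  have v4 : (e11 * e22) * e11 = 0 := by rw [T4, zero_mul]
  have v5 : (u21 * e11) * u12 = e22 := by
    rw [hu21, hu12, he11, he22]
    simp only [mul_assoc]
    rw [k2', hPad', hPa', hPsq, mul_one, mul_neg, neg_neg]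
  have v6 : (u21 * t12) * u12 = 0 := by
    rw [hu21, hu12, ht12]
    simp only [mul_assoc]
    rw [hSa', haaX]
    simp only [mul_zero]
  have v7 : (u21 * t21) * u12 = 0 := by
    rw [hu21, hu12, ht21]
    simp only [mul_assoc]
    rw [← hSad', hadadX]
    simp only [mul_zero]
  have v8 : (u21 * e22) * u12 = 0 := by
    rw [hu21, hu12, he22]
    simp only [mul_assoc]
    rw [hadadX]
    simp only [mul_zero]
  -- the representation of W
  obtain ⟨b11, b12, b21, b22, hb11, hb12, hb21, hb22, hWrep⟩ := hrep W
  have sand : ∀ q b u r : H →ₗ[ℂ] H, q * b = b * q →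
      (q * (b * u)) * r = b * ((q * u) * r) := by
    intro q b u r h
    rw [← mul_assoc q b u, h, mul_assoc b q u, mul_assoc]
  have hX2 : (e11 * W) * e11 + (u21 * W) * u12 = b11 := by
    rw [hWrep]
    simp only [mul_add, add_mul]
    rw [sand e11 b11 e11 e11 (hBe11 b11 hb11), sand e11 b12 t12 e11 (hBe11 b12 hb12),
      sand e11 b21 t21 e11 (hBe11 b21 hb21), sand e11 b22 e22 e11 (hBe11 b22 hb22),
      sand u21 b11 e11 u12 (hBu21 b11 hb11), sand u21 b12 t12 u12 (hBu21 b12 hb12),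
      sand u21 b21 t21 u12 (hBu21 b21 hb21), sand u21 b22 e22 u12 (hBu21 b22 hb22)]
    rw [v1, v2, v3, v4, v5, v6, v7, v8]
    simp only [mul_zero, add_zero, zero_add]
    rw [← mul_add, hunit, mul_one]
  have hWb : W = b11 := hX1.symm.trans hX2
  rw [hWb]
  exact hb11
end

section
/- Let f be a CAR family on H and assume f is full. Then for every j : Fin N and every operator W : H →ₗ[ℂ] H there exist O₀, O₁, O₂, O₃ in the subalgebra Algebra.adjoin ℂ {f i, Adjoint(f i) : i ≠ j} such that W = O₀ + f j * O₁ + Adjoint(f j) * O₂ + f j * Adjoint(f j) * O₃. -/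
open LinearMap

private lemma car_reassoc₁ {R : Type*} [Ring R] {x y z w : R} (h : x * y = z * w) (t : R) :
    x * (y * t) = z * (w * t) := by rw [← mul_assoc, h, mul_assoc]

private lemma car_reassoc₀ {R : Type*} [Ring R] {x y : R} (h : x * y = 0) (t : R) :
    x * (y * t) = 0 := by rw [← mul_assoc, h, zero_mul]

private lemma car_reassoc_mix {R : Type*} [Ring R] {x y z w : R} (h : x * y = 1 - z * w)
    (t : R) : x * (y * t) = t - z * (w * t) := by
  rw [← mul_assoc, h, sub_mul, one_mul, mul_assoc]

/-- Decomposition of a general operator relative to mode `j`, with coefficients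
local on the complementary modes. -/
theorem stmt_2 {H : Type*} [NormedAddCommGroup H] [InnerProductSpace ℂ H]
    [FiniteDimensional ℂ H] [Nontrivial H] {N : ℕ}
    (f : Fin N → (H →ₗ[ℂ] H))
    (hCAR₁ : ∀ i j, f i * f j + f j * f i = 0)
    (hCAR₂ : ∀ i j, f i * adjoint (f j) + adjoint (f j) * f i
      = if i = j then 1 else 0)
    (hfull : Algebra.adjoin ℂ
      {A : H →ₗ[ℂ] H | ∃ i : Fin N, A = f i ∨ A = adjoint (f i)} = ⊤)
    (j : Fin N) (W : H →ₗ[ℂ] H) :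
    ∃ O₀ O₁ O₂ O₃ : H →ₗ[ℂ] H,
      O₀ ∈ Algebra.adjoin ℂ
        {A : H →ₗ[ℂ] H | ∃ i : Fin N, i ≠ j ∧ (A = f i ∨ A = adjoint (f i))} ∧
      O₁ ∈ Algebra.adjoin ℂ
        {A : H →ₗ[ℂ] H | ∃ i : Fin N, i ≠ j ∧ (A = f i ∨ A = adjoint (f i))} ∧
      O₂ ∈ Algebra.adjoin ℂ
        {A : H →ₗ[ℂ] H | ∃ i : Fin N, i ≠ j ∧ (A = f i ∨ A = adjoint (f i))} ∧
      O₃ ∈ Algebra.adjoin ℂ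
        {A : H →ₗ[ℂ] H | ∃ i : Fin N, i ≠ j ∧ (A = f i ∨ A = adjoint (f i))} ∧
      W = O₀ + f j * O₁ + adjoint (f j) * O₂ + f j * adjoint (f j) * O₃ := by
  classical
  set B := Algebra.adjoin ℂ
      {A : H →ₗ[ℂ] H | ∃ i : Fin N, i ≠ j ∧ (A = f i ∨ A = adjoint (f i))} with hBdef
  set aj := f j with haj
  set dj := adjoint (f j) with hdj
  -- basic relations
  have haa : aj * aj = 0 := by
    have h := hCAR₁ j j
    have h2 : (2 : ℂ) • (f j * f j) = 0 := by rw [two_smul]; exact h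
    have := (smul_eq_zero.mp h2).resolve_left (by norm_num)
    simpa [haj] using this
  have hdd : dj * dj = 0 := by
    have : dj * dj = adjoint (aj * aj) := by
      rw [haj, hdj]
      exact (LinearMap.adjoint_comp (f j) (f j)).symm
    rw [this, haa, map_zero]
  have hmix : dj * aj = 1 - aj * dj := by
    have h := hCAR₂ j j
    simp only [if_pos rfl] at h
    rw [← haj, ← hdj] at h
    exact eq_sub_of_add_eq' h
  -- anticommutation of complementary generators with aj and dj
  have hgen : ∀ g ∈ {A : H →ₗ[ℂ] H | ∃ i : Fin N, i ≠ j ∧ (A = f i ∨ A = adjoint (f i))},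
      g * aj = aj * (-g) ∧ g * dj = dj * (-g) := by
    rintro g ⟨i, hij, hg | hg⟩
    · subst hg
      constructor
      · have h := hCAR₁ i j
        rw [← haj] at h
        rw [mul_neg]
        exact eq_neg_of_add_eq_zero_left h
      · have h := hCAR₂ i j
        rw [if_neg hij, ← hdj] at h
        rw [mul_neg]
        exact eq_neg_of_add_eq_zero_left h
    · subst hg
      constructor
      · have h := hCAR₂ j i
        rw [if_neg (fun hji => hij hji.symm), ← haj] at h
        rw [mul_neg]
        exact eq_neg_of_add_eq_zero_right h
      · have h := hCAR₁ j i
        have h' : adjoint (f i) * dj + dj * adjoint (f i) = 0 := by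
          have := congrArg (LinearMap.adjoint) h
          rw [map_add, map_zero] at this
          have e1 : adjoint (f j * f i) = adjoint (f i) * adjoint (f j) :=
            LinearMap.adjoint_comp (f j) (f i)
          have e2 : adjoint (f i * f j) = adjoint (f j) * adjoint (f i) :=
            LinearMap.adjoint_comp (f i) (f j)
          rw [e1, e2, ← hdj] at this
          exact this
        rw [mul_neg]
        exact eq_neg_of_add_eq_zero_left h'
  -- key: every element of B can be moved past aj and dj
  have key : ∀ x ∈ B, ∃ y, y ∈ B ∧ x * aj = aj * y ∧ x * dj = dj * y := by
    intro x hx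
    induction hx using Algebra.adjoin_induction with
    | mem g hg =>
      exact ⟨-g, neg_mem (Algebra.subset_adjoin hg), (hgen g hg).1, (hgen g hg).2⟩
    | algebraMap r =>
      refine ⟨algebraMap ℂ _ r, Subalgebra.algebraMap_mem _ r, ?_, ?_⟩ <;>
        rw [Algebra.algebraMap_eq_smul_one, smul_mul_assoc, mul_smul_comm, one_mul, mul_one]
    | add x y hxm hym ihx ihy =>
      obtain ⟨x', hx', hxa, hxd⟩ := ihx
      obtain ⟨y', hy', hya, hyd⟩ := ihy
      exact ⟨x' + y', add_mem hx' hy', by rw [add_mul, mul_add, hxa, hya],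
        by rw [add_mul, mul_add, hxd, hyd]⟩
    | mul x y hxm hym ihx ihy =>
      obtain ⟨x', hx', hxa, hxd⟩ := ihx
      obtain ⟨y', hy', hya, hyd⟩ := ihy
      exact ⟨x' * y', mul_mem hx' hy',
        by rw [mul_assoc, hya, ← mul_assoc, hxa, mul_assoc],
        by rw [mul_assoc, hyd, ← mul_assoc, hxd, mul_assoc]⟩
  -- now induct on W in the full algebra
  have hWmem : W ∈ Algebra.adjoin ℂ
      {A : H →ₗ[ℂ] H | ∃ i : Fin N, A = f i ∨ A = adjoint (f i)} := by
    rw [hfull]; exact Algebra.mem_top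
  clear hfull
  induction hWmem using Algebra.adjoin_induction with
  | mem g hg =>
    obtain ⟨i, hg | hg⟩ := hg
    · by_cases hij : i = j
      · subst hij; subst hg
        exact ⟨0, 1, 0, 0, zero_mem _, one_mem _, zero_mem _, zero_mem _, by
          noncomm_ring⟩
      · exact ⟨g, 0, 0, 0, Algebra.subset_adjoin ⟨i, hij, Or.inl hg⟩,
          zero_mem _, zero_mem _, zero_mem _, by noncomm_ring⟩
    · by_cases hij : i = j
      · subst hij; subst hg
        exact ⟨0, 0, 1, 0, zero_mem _, zero_mem _, one_mem _, zero_mem _, by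
          noncomm_ring⟩
      · exact ⟨g, 0, 0, 0, Algebra.subset_adjoin ⟨i, hij, Or.inr hg⟩,
          zero_mem _, zero_mem _, zero_mem _, by noncomm_ring⟩
  | algebraMap r =>
    exact ⟨algebraMap ℂ _ r, 0, 0, 0, Subalgebra.algebraMap_mem _ r,
      zero_mem _, zero_mem _, zero_mem _, by noncomm_ring⟩
  | add x y hxm hym ihx ihy =>
    obtain ⟨b₀, b₁, b₂, b₃, hb₀, hb₁, hb₂, hb₃, hxe⟩ := ihx
    obtain ⟨c₀, c₁, c₂, c₃, hc₀, hc₁, hc₂, hc₃, hye⟩ := ihy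
    exact ⟨b₀ + c₀, b₁ + c₁, b₂ + c₂, b₃ + c₃, add_mem hb₀ hc₀, add_mem hb₁ hc₁,
      add_mem hb₂ hc₂, add_mem hb₃ hc₃, by rw [hxe, hye]; noncomm_ring⟩
  | mul x y hxm hym ihx ihy =>
    obtain ⟨b₀, b₁, b₂, b₃, hb₀, hb₁, hb₂, hb₃, hxe⟩ := ihx
    obtain ⟨c₀, c₁, c₂, c₃, hc₀, hc₁, hc₂, hc₃, hye⟩ := ihy
    obtain ⟨b₀', hb₀', hb₀a, hb₀d⟩ := key b₀ hb₀
    obtain ⟨b₁', hb₁', hb₁a, hb₁d⟩ := key b₁ hb₁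
    obtain ⟨b₂', hb₂', hb₂a, hb₂d⟩ := key b₂ hb₂
    obtain ⟨b₃', hb₃', hb₃a, hb₃d⟩ := key b₃ hb₃
    obtain ⟨b₀'', hb₀'', hb₀a', hb₀d'⟩ := key b₀' hb₀'
    obtain ⟨b₁'', hb₁'', hb₁a', hb₁d'⟩ := key b₁' hb₁'
    obtain ⟨b₂'', hb₂'', hb₂a', hb₂d'⟩ := key b₂' hb₂'
    obtain ⟨b₃'', hb₃'', hb₃a', hb₃d'⟩ := key b₃' hb₃'
    refine ⟨b₀ * c₀ + b₂' * c₁,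
      b₀' * c₁ + b₁ * c₀ + b₃' * c₁,
      b₀' * c₂ + b₂ * c₀ + b₂'' * c₃,
      b₀'' * c₃ + b₁' * c₂ - b₂' * c₁ + b₃'' * c₃ + b₃ * c₀,
      add_mem (mul_mem hb₀ hc₀) (mul_mem hb₂' hc₁),
      add_mem (add_mem (mul_mem hb₀' hc₁) (mul_mem hb₁ hc₀)) (mul_mem hb₃' hc₁),
      add_mem (add_mem (mul_mem hb₀' hc₂) (mul_mem hb₂ hc₀)) (mul_mem hb₂'' hc₃),
      add_mem (add_mem (sub_mem (add_mem (mul_mem hb₀'' hc₃) (mul_mem hb₁' hc₂))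
        (mul_mem hb₂' hc₁)) (mul_mem hb₃'' hc₃)) (mul_mem hb₃ hc₀), ?_⟩
    rw [hxe, hye]
    simp only [mul_add, add_mul, mul_assoc, mul_sub, sub_mul,
      car_reassoc₁ hb₀a, car_reassoc₁ hb₀d, car_reassoc₁ hb₀a', car_reassoc₁ hb₀d',
      car_reassoc₁ hb₁a, car_reassoc₁ hb₁d, car_reassoc₁ hb₁a', car_reassoc₁ hb₁d',
      car_reassoc₁ hb₂a, car_reassoc₁ hb₂d, car_reassoc₁ hb₂a', car_reassoc₁ hb₂d',
      car_reassoc₁ hb₃a, car_reassoc₁ hb₃d, car_reassoc₁ hb₃a', car_reassoc₁ hb₃d',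
      car_reassoc₀ haa, car_reassoc₀ hdd, car_reassoc_mix hmix,
      mul_zero, zero_mul, add_zero, zero_add, sub_zero]
    noncomm_ring
end

section
/- Let f be a CAR family on H and assume f is full. Let U, V be unitaries on H such that Adjoint(U) * f i * U = Adjoint(V) * f i * V for every i : Fin N. Then there exists c : ℂ with ‖c‖ = 1 such that U = c • V. -/
open LinearMap

/-- An endomorphism commuting with all endomorphisms is scalar. -/
lemma aux_scalar {H : Type*} [NormedAddCommGroup H] [InnerProductSpace ℂ H]
    [FiniteDimensional ℂ H] [Nontrivial H] (W : H →ₗ[ℂ] H)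
    (h : ∀ A : H →ₗ[ℂ] H, A * W = W * A) : ∃ c : ℂ, W = c • 1 := by
  obtain ⟨x, hx⟩ := exists_ne (0 : H)
  -- W x ∈ span {x}
  have hxK : x ∈ (ℂ ∙ x) := Submodule.mem_span_singleton_self x
  set K : Submodule ℂ H := ℂ ∙ x with hK
  let P : H →ₗ[ℂ] H := K.subtype ∘ₗ (Submodule.orthogonalProjectionOnto K).toLinearMap
  have hPx : P x = x := by
    simp only [P, coe_comp, Function.comp_apply, ContinuousLinearMap.coe_coe,
      Submodule.coe_subtype]
    exact Submodule.starProjection_eq_self_iff.mpr hxK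
  have hWx : W x ∈ K := by
    have h1 : W (P x) = P (W x) := by
      have := congrArg (fun A => A x) (h P)
      simpa [mul_apply] using this.symm
    rw [hPx] at h1
    rw [h1]
    exact Submodule.coe_mem _
  obtain ⟨c, hc⟩ := Submodule.mem_span_singleton.mp hWx
  refine ⟨c, ?_⟩
  ext z
  have hxx : ((inner ℂ x x : ℂ)) ≠ 0 := inner_self_ne_zero.mpr hx
  let A : H →ₗ[ℂ] H := (((inner ℂ x x : ℂ))⁻¹ • (innerSL ℂ x).toLinearMap).smulRight z
  have hAx : A x = z := by
    simp [A, inv_mul_cancel₀ hxx, hx]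
  have h2 : A (W x) = W (A x) := by
    have := congrArg (fun B => B x) (h A)
    simpa [mul_apply] using this
  rw [hAx, ← hc] at h2
  have h3 : A (c • x) = c • z := by
    rw [map_smul, hAx]
  rw [h3] at h2
  simp [← h2]

/-- Theorem 1.5: the complete set of fermionic descriptors determines the
unitary uniquely up to a global phase. -/
theorem stmt_3 {H : Type*} [NormedAddCommGroup H] [InnerProductSpace ℂ H]
    [FiniteDimensional ℂ H] [Nontrivial H] {N : ℕ}
    (f : Fin N → (H →ₗ[ℂ] H))
    (hCAR₁ : ∀ i j, f i * f j + f j * f i = 0)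
    (hCAR₂ : ∀ i j, f i * adjoint (f j) + adjoint (f j) * f i
      = if i = j then 1 else 0)
    (hfull : Algebra.adjoin ℂ
      {A : H →ₗ[ℂ] H | ∃ i : Fin N, A = f i ∨ A = adjoint (f i)} = ⊤)
    (U V : H →ₗ[ℂ] H)
    (hU₁ : adjoint U * U = 1) (hU₂ : U * adjoint U = 1)
    (hV₁ : adjoint V * V = 1) (hV₂ : V * adjoint V = 1)
    (hdesc : ∀ i : Fin N, adjoint U * f i * U = adjoint V * f i * V) :
    ∃ c : ℂ, ‖c‖ = 1 ∧ U = c • V := by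
  set W : H →ₗ[ℂ] H := U * adjoint V with hW
  -- W commutes with each f i
  have key : ∀ g : H →ₗ[ℂ] H, adjoint U * g * U = adjoint V * g * V →
      W * g = g * W := by
    intro g hg
    have : U * (adjoint U * g * U) * adjoint V = U * (adjoint V * g * V) * adjoint V := by
      rw [hg]
    calc W * g = U * adjoint V * g := rfl
      _ = U * adjoint V * g * 1 := by rw [mul_one]
      _ = U * adjoint V * g * (V * adjoint V) := by rw [hV₂]
      _ = U * (adjoint V * g * V) * adjoint V := by noncomm_ring
      _ = U * (adjoint U * g * U) * adjoint V := by rw [hg]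
      _ = (U * adjoint U) * g * (U * adjoint V) := by noncomm_ring
      _ = 1 * g * W := by rw [hU₂, hW]
      _ = g * W := by rw [one_mul]
  have hadj : ∀ i, adjoint U * adjoint (f i) * U = adjoint V * adjoint (f i) * V := by
    intro i
    have := congrArg adjoint (hdesc i)
    simpa [Module.End.mul_eq_comp, adjoint_comp, adjoint_adjoint, comp_assoc,
      ← mul_assoc] using this
  -- W commutes with everything
  have hcent : ∀ A : H →ₗ[ℂ] H, A * W = W * A := by
    have hle : Algebra.adjoin ℂ
        {A : H →ₗ[ℂ] H | ∃ i : Fin N, A = f i ∨ A = adjoint (f i)} ≤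
        Subalgebra.centralizer ℂ {W} := by
      apply Algebra.adjoin_le
      rintro A ⟨i, hA | hA⟩ <;> subst hA <;>
        refine Subalgebra.mem_centralizer_iff ℂ |>.mpr ?_ <;>
        rintro g rfl
      · exact key _ (hdesc i)
      · exact key _ (hadj i)
    rw [hfull] at hle
    intro A
    exact (Subalgebra.mem_centralizer_iff ℂ |>.mp (hle trivial)) W rfl |>.symm
  obtain ⟨c, hc⟩ := aux_scalar W hcent
  have hUV : U = c • V := by
    calc U = U * 1 := (mul_one U).symm
      _ = U * (adjoint V * V) := by rw [hV₁]
      _ = W * V := by rw [hW]; noncomm_ring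
      _ = (c • 1) * V := by rw [hc]
      _ = c • V := by simp [smul_mul_assoc]
  -- unitarity of W gives |c| = 1
  have hWadj : adjoint W * W = 1 := by
    rw [hW]
    calc adjoint (U * adjoint V) * (U * adjoint V)
        = V * (adjoint U * U) * adjoint V := by
          simp only [Module.End.mul_eq_comp, adjoint_comp, adjoint_adjoint, comp_assoc]
      _ = V * adjoint V := by rw [hU₁]; noncomm_ring
      _ = 1 := hV₂
  rw [hc] at hWadj
  have hadj1 : adjoint ((c : ℂ) • (1 : H →ₗ[ℂ] H)) = (starRingEnd ℂ c) • 1 := by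
    rw [map_smulₛₗ]
    congr 1
    exact ((LinearMap.eq_adjoint_iff (1 : H →ₗ[ℂ] H) 1).mpr (fun x y => rfl)).symm
  rw [hadj1] at hWadj
  have hcc : (starRingEnd ℂ c) * c = 1 := by
    obtain ⟨x, hx⟩ := exists_ne (0 : H)
    have := congrArg (fun A : H →ₗ[ℂ] H => A x) hWadj
    simp only [Module.End.mul_apply, LinearMap.smul_apply, Module.End.one_apply, smul_smul] at this
    have h0 : ((starRingEnd ℂ c) * c - 1) • x = 0 := by
      rw [sub_smul, one_smul, this, sub_self]
    rcases smul_eq_zero.mp h0 with h | h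
    · exact sub_eq_zero.mp h
    · exact absurd h hx
  have hnorm : ‖c‖ = 1 := by
    have : ‖c‖ ^ 2 = 1 := by
      have := congrArg (fun z : ℂ => ‖z‖) hcc
      simpa [sq] using this
    nlinarith [norm_nonneg c]
  exact ⟨c, hnorm, hUV⟩
end

section
/- Let f be a CAR family on H with parity operator P. Let I' be a set of indices in Fin N and let j : Fin N with j ∉ I'. If W is an operator with W ∈ Algebra.adjoin ℂ {f i, Adjoint(f i) : i ∈ I'} and W * P = P * W, then W * f j = f j * W; in particular, if W is moreover unitary, then Adjoint(W) * f j * W = f j. -/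
open LinearMap

/-- A parity-superselected operator local on a set of modes `I'` commutes with
the annihilation operator of any mode outside `I'`; in particular, if it is
unitary, it leaves that annihilation operator invariant under conjugation. -/
theorem stmt_7 {H : Type*} [NormedAddCommGroup H] [InnerProductSpace ℂ H]
    [FiniteDimensional ℂ H] [Nontrivial H] {N : ℕ}
    (f : Fin N → (H →ₗ[ℂ] H))
    (hCAR₁ : ∀ i j, f i * f j + f j * f i = 0)
    (hCAR₂ : ∀ i j, f i * adjoint (f j) + adjoint (f j) * f i
      = if i = j then 1 else 0)
    (P : H →ₗ[ℂ] H)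
    (hPuni₁ : adjoint P * P = 1) (hPuni₂ : P * adjoint P = 1)
    (hPsq : P * P = 1)
    (hPanti : ∀ i, P * f i = -(f i * P))
    (I' : Set (Fin N)) (j : Fin N) (hj : j ∉ I')
    (W : H →ₗ[ℂ] H)
    (hWmem : W ∈ Algebra.adjoin ℂ
      {A : H →ₗ[ℂ] H | ∃ i ∈ I', A = f i ∨ A = adjoint (f i)})
    (hWP : W * P = P * W) :
    W * f j = f j * W ∧
      (adjoint W * W = 1 → W * adjoint W = 1 → adjoint W * f j * W = f j) := by
  -- P is self-adjoint
  have hPadj : adjoint P = P := by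
    calc adjoint P = adjoint P * (P * P) := by rw [hPsq, mul_one]
    _ = (adjoint P * P) * P := by rw [mul_assoc]
    _ = P := by rw [hPuni₁, one_mul]
  -- P anticommutes with adjoints of the f i
  have hPanti' : ∀ i, P * adjoint (f i) = -(adjoint (f i) * P) := by
    intro i
    have h := congrArg star (hPanti i)
    simp only [star_mul, star_neg, LinearMap.star_eq_adjoint, hPadj] at h
    rw [h, neg_neg]
  -- key identity on the generated algebra
  have key : ∀ A ∈ Algebra.adjoin ℂ
      {A : H →ₗ[ℂ] H | ∃ i ∈ I', A = f i ∨ A = adjoint (f i)},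
      A * f j = f j * (P * A * P) := by
    intro A hA
    induction hA using Algebra.adjoin_induction with
    | mem g hg =>
      obtain ⟨i, hi, hg⟩ := hg
      have hij : i ≠ j := fun h => hj (h ▸ hi)
      rcases hg with rfl | rfl
      · have h1 : f i * f j = -(f j * f i) :=
          eq_neg_of_add_eq_zero_left (hCAR₁ i j)
        have hg : P * f i * P = -(f i) := by
          rw [hPanti i, neg_mul, mul_assoc, hPsq, mul_one]
        rw [hg, mul_neg]
        exact h1
      · have h1 : adjoint (f i) * f j = -(f j * adjoint (f i)) := by
          have h := hCAR₂ j i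
          rw [if_neg (fun h => hij h.symm)] at h
          exact eq_neg_of_add_eq_zero_right h
        have hg : P * adjoint (f i) * P = -(adjoint (f i)) := by
          rw [hPanti' i, neg_mul, mul_assoc, hPsq, mul_one]
        rw [hg, mul_neg]
        exact h1
    | algebraMap r =>
      have h : (algebraMap ℂ (H →ₗ[ℂ] H)) r = r • 1 := by
        simp [Algebra.algebraMap_eq_smul_one]
      rw [h, smul_mul_assoc, one_mul, mul_smul_comm, smul_mul_assoc,
        mul_smul_comm, mul_one, hPsq, mul_one]
    | add x y hx hy ihx ihy =>
      rw [add_mul, ihx, ihy, mul_add, add_mul, mul_add]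
    | mul x y hx hy ihx ihy =>
      have hmul : (P * x * P) * (P * y * P) = P * (x * y) * P := by
        calc (P * x * P) * (P * y * P) = P * x * ((P * P) * (y * P)) := by
              simp only [mul_assoc]
        _ = P * x * (1 * (y * P)) := by rw [hPsq]
        _ = P * (x * y) * P := by simp only [one_mul, mul_assoc]
      calc (x * y) * f j = x * (y * f j) := by rw [mul_assoc]
      _ = x * (f j * (P * y * P)) := by rw [ihy]
      _ = (x * f j) * (P * y * P) := by rw [← mul_assoc]
      _ = (f j * (P * x * P)) * (P * y * P) := by rw [ihx]
      _ = f j * (P * (x * y) * P) := by rw [mul_assoc, hmul]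
  have hmain : W * f j = f j * W := by
    have h := key W hWmem
    rw [← hWP, mul_assoc, hPsq, mul_one] at h
    exact h
  refine ⟨hmain, fun h1 _ => ?_⟩
  calc adjoint W * f j * W = adjoint W * (W * f j) := by rw [mul_assoc, hmain]
  _ = (adjoint W * W) * f j := by rw [mul_assoc]
  _ = f j := by rw [h1, one_mul]
end

section
/- For N : ℕ, define for each j : Fin N the matrix q j : Matrix ((Fin N) → (Fin 2)) ((Fin N) → (Fin 2)) ℂ by (q j) s t = if (s j = 0 ∧ t j = 1 ∧ ∀ k ≠ j, s k = t k) then 1 else 0. Then Algebra.adjoin ℂ ({q j : j : Fin N} ∪ {(q j)ᴴ : j : Fin N}) = ⊤, i.e. the operators q j together with their conjugate transposes generate the full matrix algebra of the N-qubit system. -/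
open Matrix

/-- The single-qubit lowering operator `|0⟩⟨1|` acting on the `j`-th qubit of an
`N`-qubit system (identity on the other qubits). -/
def qubitLower (N : ℕ) (j : Fin N) :
    Matrix (Fin N → Fin 2) (Fin N → Fin 2) ℂ := fun s t =>
  if s j = 0 ∧ t j = 1 ∧ ∀ k, k ≠ j → s k = t k then 1 else 0

/-- The single-qubit operator `|a⟩⟨b|` on the `j`-th qubit. -/
def qubitOp (N : ℕ) (j : Fin N) (a b : Fin 2) :
    Matrix (Fin N → Fin 2) (Fin N → Fin 2) ℂ := fun s t =>
  if s j = a ∧ t j = b ∧ ∀ k, k ≠ j → s k = t k then 1 else 0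

lemma qubitOp_mul (N : ℕ) (j : Fin N) (a b d : Fin 2) :
    qubitOp N j a b * qubitOp N j b d = qubitOp N j a d := by
  ext u v
  rw [Matrix.mul_apply]
  rw [Finset.sum_eq_single (Function.update u j b)]
  · have hup : ∀ k, k ≠ j → Function.update u j b k = u k := fun k hk =>
      Function.update_of_ne hk _ _
    have e1 : (u j = a ∧ Function.update u j b j = b ∧
        ∀ k, k ≠ j → u k = Function.update u j b k) ↔ u j = a :=
      ⟨fun h => h.1, fun h => ⟨h, Function.update_self _ _ _,
        fun k hk => (hup k hk).symm⟩⟩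
    have e2 : (Function.update u j b j = b ∧ v j = d ∧
        ∀ k, k ≠ j → Function.update u j b k = v k) ↔
        (v j = d ∧ ∀ k, k ≠ j → u k = v k) :=
      ⟨fun h => ⟨h.2.1, fun k hk => (hup k hk) ▸ h.2.2 k hk⟩,
        fun h => ⟨Function.update_self _ _ _, h.1,
          fun k hk => (hup k hk).trans (h.2 k hk)⟩⟩
    simp only [qubitOp]
    rw [if_congr e1 rfl rfl, if_congr e2 rfl rfl, ite_zero_mul_ite_zero, mul_one]
  · intro w _ hw
    simp only [qubitOp]
    by_cases h1 : u j = a ∧ w j = b ∧ ∀ k, k ≠ j → u k = w k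
    · exfalso; apply hw
      funext k
      by_cases hk : k = j
      · subst hk; rw [Function.update_self]; exact h1.2.1
      · rw [Function.update_of_ne hk]; exact (h1.2.2 k hk).symm
    · rw [if_neg h1, zero_mul]
  · intro h; exact absurd (Finset.mem_univ _) h

lemma qubitOp_mem (N : ℕ) (j : Fin N) (a b : Fin 2) :
    qubitOp N j a b ∈ Algebra.adjoin ℂ
      ((Set.range fun j : Fin N => qubitLower N j) ∪
        (Set.range fun j : Fin N => (qubitLower N j)ᴴ)) := by
  set A := Algebra.adjoin ℂ
      ((Set.range fun j : Fin N => qubitLower N j) ∪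
        (Set.range fun j : Fin N => (qubitLower N j)ᴴ)) with hA
  have hq : qubitOp N j 0 1 ∈ A := by
    apply Algebra.subset_adjoin
    exact Or.inl ⟨j, rfl⟩
  have hqd : qubitOp N j 1 0 ∈ A := by
    have e : ∀ u v : Fin N → Fin 2,
        (v j = 0 ∧ u j = 1 ∧ ∀ k, k ≠ j → v k = u k) ↔
        (u j = 1 ∧ v j = 0 ∧ ∀ k, k ≠ j → u k = v k) := fun u v =>
      ⟨fun h => ⟨h.2.1, h.1, fun k hk => (h.2.2 k hk).symm⟩,
        fun h => ⟨h.2.1, h.1, fun k hk => (h.2.2 k hk).symm⟩⟩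
    have : (qubitLower N j)ᴴ = qubitOp N j 1 0 := by
      ext u v
      simp only [conjTranspose_apply, qubitLower, qubitOp]
      rw [if_congr (e u v) rfl rfl]
      split_ifs <;> simp
    rw [← this]
    apply Algebra.subset_adjoin
    exact Or.inr ⟨j, rfl⟩
  fin_cases a <;> fin_cases b
  · show qubitOp N j 0 0 ∈ A
    rw [← qubitOp_mul N j 0 1 0]; exact mul_mem hq hqd
  · exact hq
  · exact hqd
  · show qubitOp N j 1 1 ∈ A
    rw [← qubitOp_mul N j 1 0 1]; exact mul_mem hqd hq

/-- Partial product matrix. -/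
def partProd (N : ℕ) (s t : Fin N → Fin 2) (S : Finset (Fin N)) :
    Matrix (Fin N → Fin 2) (Fin N → Fin 2) ℂ := fun u v =>
  if (∀ j ∈ S, u j = s j ∧ v j = t j) ∧ ∀ j ∉ S, u j = v j then 1 else 0

lemma partProd_empty (N : ℕ) (s t : Fin N → Fin 2) :
    partProd N s t ∅ = 1 := by
  ext u v
  show (if _ then _ else _) = _
  by_cases h : u = v
  · subst h
    rw [if_pos ⟨fun k hk => absurd hk (Finset.notMem_empty k), fun k _ => rfl⟩,
      Matrix.one_apply_eq]
  · rw [if_neg fun hc => h (funext fun k => hc.2 k (Finset.notMem_empty k)),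
      Matrix.one_apply_ne h]

lemma partProd_insert (N : ℕ) (s t : Fin N → Fin 2) (S : Finset (Fin N))
    (j : Fin N) (hj : j ∉ S) :
    partProd N s t (insert j S) = qubitOp N j (s j) (t j) * partProd N s t S := by
  ext u v
  rw [Matrix.mul_apply]
  rw [Finset.sum_eq_single (Function.update u j (t j))]
  · set w := Function.update u j (t j) with hw
    have hup : ∀ k, k ≠ j → w k = u k := fun k hk => Function.update_of_ne hk _ _
    have hwj : w j = t j := Function.update_self _ _ _
    have e1 : (u j = s j ∧ w j = t j ∧ ∀ k, k ≠ j → u k = w k) ↔ u j = s j :=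
      ⟨fun h => h.1, fun h => ⟨h, hwj, fun k hk => (hup k hk).symm⟩⟩
    have e2 : ((∀ k ∈ S, w k = s k ∧ v k = t k) ∧ ∀ k ∉ S, w k = v k) ↔
        ((∀ k ∈ S, u k = s k ∧ v k = t k) ∧ v j = t j ∧
          ∀ k, k ∉ S → k ≠ j → u k = v k) := by
      constructor
      · intro h
        refine ⟨fun k hk => (hup k fun he => hj (he ▸ hk)) ▸ h.1 k hk,
          hwj ▸ (h.2 j hj).symm ▸ rfl, fun k hkS hkj => (hup k hkj) ▸ h.2 k hkS⟩
      · intro h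
        refine ⟨fun k hk => hup k (fun he => hj (he ▸ hk)) ▸ h.1 k hk, fun k hkS => ?_⟩
        by_cases hkj : k = j
        · subst hkj; rw [hwj]; exact h.2.1.symm
        · rw [hup k hkj]; exact h.2.2 k hkS hkj
    have e3 : ((∀ k ∈ insert j S, u k = s k ∧ v k = t k) ∧
        ∀ k ∉ insert j S, u k = v k) ↔
        (u j = s j ∧ (∀ k ∈ S, u k = s k ∧ v k = t k) ∧ v j = t j ∧
          ∀ k, k ∉ S → k ≠ j → u k = v k) := by
      constructor
      · intro h
        exact ⟨(h.1 j (Finset.mem_insert_self j S)).1,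
          fun k hk => h.1 k (Finset.mem_insert_of_mem hk),
          (h.1 j (Finset.mem_insert_self j S)).2,
          fun k hkS hkj => h.2 k (by simp [hkj, hkS])⟩
      · intro h
        constructor
        · intro k hk
          rcases Finset.mem_insert.mp hk with rfl | hk'
          · exact ⟨h.1, h.2.2.1⟩
          · exact h.2.1 k hk'
        · intro k hk
          rw [Finset.mem_insert] at hk
          push_neg at hk
          exact h.2.2.2 k hk.2 hk.1
    simp only [partProd, qubitOp]
    rw [if_congr e1 rfl rfl, if_congr e2 rfl rfl, if_congr e3 rfl rfl,
      ite_zero_mul_ite_zero, mul_one]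
  · intro w _ hw
    simp only [qubitOp]
    by_cases h1 : u j = s j ∧ w j = t j ∧ ∀ k, k ≠ j → u k = w k
    · exfalso; apply hw
      funext k
      by_cases hk : k = j
      · subst hk; rw [Function.update_self]; exact h1.2.1
      · rw [Function.update_of_ne hk]; exact (h1.2.2 k hk).symm
    · rw [if_neg h1, zero_mul]
  · intro h; exact absurd (Finset.mem_univ _) h

lemma partProd_univ (N : ℕ) (s t : Fin N → Fin 2) :
    partProd N s t Finset.univ = Matrix.single s t 1 := by
  ext u v
  simp only [partProd, Matrix.single, of_apply]
  by_cases h : s = u ∧ t = v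
  · obtain ⟨rfl, rfl⟩ := h
    rw [if_pos ⟨fun k _ => ⟨rfl, rfl⟩, fun k hk => absurd (Finset.mem_univ k) hk⟩,
      if_pos ⟨rfl, rfl⟩]
  · rw [if_neg h, if_neg]
    intro hc
    exact h ⟨(funext fun k => (hc.1 k (Finset.mem_univ k)).1).symm,
      (funext fun k => (hc.1 k (Finset.mem_univ k)).2).symm⟩

/-- Appendix Proposition: the operators `q j` together with their adjoints
`q j†` generate the full `N`-qubit operator algebra. -/
theorem stmt_8 (N : ℕ) :
    Algebra.adjoin ℂ
      ((Set.range fun j : Fin N => qubitLower N j) ∪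
        (Set.range fun j : Fin N => (qubitLower N j)ᴴ)) = ⊤ := by
  set A := Algebra.adjoin ℂ
      ((Set.range fun j : Fin N => qubitLower N j) ∪
        (Set.range fun j : Fin N => (qubitLower N j)ᴴ)) with hA
  rw [eq_top_iff]
  intro M _
  have hpart : ∀ (s t : Fin N → Fin 2) (S : Finset (Fin N)), partProd N s t S ∈ A := by
    intro s t S
    induction S using Finset.induction_on with
    | empty => rw [partProd_empty]; exact one_mem A
    | insert _ _ hj ih =>
      rw [partProd_insert N s t _ _ hj]
      exact mul_mem (qubitOp_mem N _ _ _) ih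
  have hstd : ∀ (s t : Fin N → Fin 2), Matrix.single s t (M s t) ∈ A := by
    intro s t
    have : Matrix.single s t (M s t) = M s t • Matrix.single s t (1 : ℂ) := by
      rw [smul_single, smul_eq_mul, mul_one]
    rw [this, ← partProd_univ]
    exact Subalgebra.smul_mem A (hpart s t Finset.univ) _
  rw [matrix_eq_sum_single M]
  exact sum_mem fun s _ => sum_mem fun t _ => hstd s t
end

section
/- Let f be a CAR family on H and define P := ∏_{i : Fin N} (f i * Adjoint(f i) - Adjoint(f i) * f i), the product taken over Fin N in increasing order (the factors pairwise commute, so the order is immaterial). Then P * P = 1, Adjoint(P) = P, and P * f j = -(f j * P) for every j : Fin N. -/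
open LinearMap

private lemma anti_aux {R : Type*} [Ring R] {x u : R} (h : x * u = -(u * x)) (t : R) :
    x * (u * t) = -(u * (x * t)) := by
  rw [← mul_assoc, h, neg_mul, mul_assoc]

private lemma swap2 {R : Type*} [Ring R] {x y u v : R}
    (hxu : x * u = -(u * x)) (hxv : x * v = -(v * x))
    (hyu : y * u = -(u * y)) (hyv : y * v = -(v * y)) :
    (x * y) * (u * v) = (u * v) * (x * y) := by
  calc (x * y) * (u * v) = x * (y * (u * v)) := by rw [mul_assoc]
    _ = x * (-(u * (y * v))) := by rw [anti_aux hyu]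
    _ = -(x * (u * (y * v))) := by rw [mul_neg]
    _ = -(-(u * (x * (y * v)))) := by rw [anti_aux hxu]
    _ = u * (x * (y * v)) := by rw [neg_neg]
    _ = u * (x * (-(v * y))) := by rw [hyv]
    _ = -(u * (x * (v * y))) := by rw [mul_neg, mul_neg]
    _ = -(u * (-(v * (x * y)))) := by rw [anti_aux hxv]
    _ = u * (v * (x * y)) := by rw [mul_neg, neg_neg]
    _ = (u * v) * (x * y) := by rw [mul_assoc]

private lemma swap1 {R : Type*} [Ring R] {x y u : R}
    (hxu : x * u = -(u * x)) (hyu : y * u = -(u * y)) :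
    (x * y) * u = u * (x * y) := by
  calc (x * y) * u = x * (y * u) := mul_assoc x y u
    _ = x * (-(u * y)) := by rw [hyu]
    _ = -(x * (u * y)) := by rw [mul_neg]
    _ = -(-(u * (x * y))) := by rw [anti_aux hxu]
    _ = u * (x * y) := neg_neg _

/-- The fermionic parity operator `P = ∏ᵢ (fᵢ fᵢ† − fᵢ† fᵢ)` (product over
`Fin N` in increasing order) is a self-adjoint involution anticommuting with
every annihilation operator. -/
theorem stmt_12 {H : Type*} [NormedAddCommGroup H] [InnerProductSpace ℂ H]
    [FiniteDimensional ℂ H] [Nontrivial H] {N : ℕ}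
    (f : Fin N → (H →ₗ[ℂ] H))
    (hCAR₁ : ∀ i j, f i * f j + f j * f i = 0)
    (hCAR₂ : ∀ i j, f i * adjoint (f j) + adjoint (f j) * f i
      = if i = j then 1 else 0)
    (P : H →ₗ[ℂ] H)
    (hP : P = (List.ofFn fun i : Fin N =>
      f i * adjoint (f i) - adjoint (f i) * f i).prod) :
    P * P = 1 ∧ adjoint P = P ∧ ∀ j : Fin N, P * f j = -(f j * P) := by
  set g : Fin N → (H →ₗ[ℂ] H) := fun i => f i * adjoint (f i) - adjoint (f i) * f i with hg
  -- adjoint of a product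
  have amul : ∀ x y : H →ₗ[ℂ] H, adjoint (x * y) = adjoint y * adjoint x := by
    intro x y
    rw [← star_eq_adjoint, star_mul, star_eq_adjoint, star_eq_adjoint]
  -- f i * f i = 0
  have hff : ∀ i, f i * f i = 0 := by
    intro i
    have h := hCAR₁ i i
    have h2 : (2 : ℂ) • (f i * f i) = 0 := by rw [two_smul]; exact h
    simpa using (smul_eq_zero.mp h2).resolve_left (by norm_num)
  have hffad : ∀ i, adjoint (f i) * adjoint (f i) = 0 := by
    intro i
    rw [← amul, hff, ← star_eq_adjoint, star_zero]
  -- anticommutation relations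
  have hA1 : ∀ i j, f i * f j = -(f j * f i) := fun i j =>
    eq_neg_of_add_eq_zero_left (hCAR₁ i j)
  have hA2 : ∀ i j, i ≠ j → f i * adjoint (f j) = -(adjoint (f j) * f i) := by
    intro i j hij
    have h := hCAR₂ i j
    rw [if_neg hij] at h
    exact eq_neg_of_add_eq_zero_left h
  have hA3 : ∀ i j, i ≠ j → adjoint (f i) * f j = -(f j * adjoint (f i)) := by
    intro i j hij
    have h := hCAR₂ j i
    rw [if_neg hij.symm] at h
    exact eq_neg_of_add_eq_zero_right h
  have hA4 : ∀ i j, adjoint (f i) * adjoint (f j) = -(adjoint (f j) * adjoint (f i)) := by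
    intro i j
    have h := congrArg star (hA1 j i)
    simpa [star_mul, star_neg, star_eq_adjoint] using h
  -- each g i is self-adjoint
  have hadj : ∀ i, adjoint (g i) = g i := by
    intro i
    show adjoint (f i * adjoint (f i) - adjoint (f i) * f i) = _
    simp only [← star_eq_adjoint, star_sub, star_mul, star_star]
    rw [star_eq_adjoint]
  -- each g i squares to 1
  have hsq : ∀ i, g i * g i = 1 := by
    intro i
    set k := f i * adjoint (f i) with hk
    set m := adjoint (f i) * f i with hm
    have hkm : k + m = 1 := by have := hCAR₂ i i; rwa [if_pos rfl] at this
    have hk0 : k * m = 0 := by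
      rw [hk, hm, mul_assoc, ← mul_assoc (adjoint (f i)), hffad, zero_mul, mul_zero]
    have hm0 : m * k = 0 := by
      rw [hk, hm, mul_assoc, ← mul_assoc (f i) (f i), hff, zero_mul, mul_zero]
    have hk2 : k * k = k := by
      have h5 : k * (k + m) = k := by rw [hkm, mul_one]
      rw [mul_add, hk0, add_zero] at h5
      exact h5
    have hm2 : m * m = m := by
      have h5 : m * (k + m) = m := by rw [hkm, mul_one]
      rw [mul_add, hm0, zero_add] at h5
      exact h5
    have hgi : g i = k - m := rfl
    rw [hgi, sub_mul, mul_sub, mul_sub, hk2, hm2, hk0, hm0, ← hkm]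
    abel
  -- g i commutes with g j
  have hcomm : ∀ i j, g i * g j = g j * g i := by
    intro i j
    rcases eq_or_ne i j with rfl | hij
    · rfl
    have e1 : g i = f i * adjoint (f i) - adjoint (f i) * f i := rfl
    have e2 : g j = f j * adjoint (f j) - adjoint (f j) * f j := rfl
    have hL : g i * g j =
        (f i * adjoint (f i)) * (f j * adjoint (f j))
          - (f i * adjoint (f i)) * (adjoint (f j) * f j)
          - (adjoint (f i) * f i) * (f j * adjoint (f j))
          + (adjoint (f i) * f i) * (adjoint (f j) * f j) := by
      rw [e1, e2]; noncomm_ring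
    have hR : g j * g i =
        (f j * adjoint (f j)) * (f i * adjoint (f i))
          - (adjoint (f j) * f j) * (f i * adjoint (f i))
          - (f j * adjoint (f j)) * (adjoint (f i) * f i)
          + (adjoint (f j) * f j) * (adjoint (f i) * f i) := by
      rw [e1, e2]; noncomm_ring
    rw [hL, hR,
      swap2 (hA1 i j) (hA2 i j hij) (hA3 i j hij) (hA4 i j),
      swap2 (hA2 i j hij) (hA1 i j) (hA4 i j) (hA3 i j hij),
      swap2 (hA3 i j hij) (hA4 i j) (hA1 i j) (hA2 i j hij),
      swap2 (hA4 i j) (hA3 i j hij) (hA2 i j hij) (hA1 i j)]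
  -- g i commutes with f j for i ≠ j
  have hgf : ∀ i j, i ≠ j → g i * f j = f j * g i := by
    intro i j hij
    have e1 : g i = f i * adjoint (f i) - adjoint (f i) * f i := rfl
    conv_lhs => rw [e1]
    rw [sub_mul, swap1 (hA1 i j) (hA3 i j hij), swap1 (hA3 i j hij) (hA1 i j),
      ← mul_sub, ← e1]
  -- g j anticommutes with f j
  have hgfj : ∀ j, g j * f j = -(f j * g j) := by
    intro j
    have e2 : g j = f j * adjoint (f j) - adjoint (f j) * f j := rfl
    have hkfj : (f j * adjoint (f j)) * f j = f j := by
      have h := hCAR₂ j j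
      rw [if_pos rfl] at h
      rw [eq_sub_of_add_eq h, sub_mul, one_mul, mul_assoc, hff, mul_zero, sub_zero]
    have h1 : g j * f j = f j := by
      rw [e2, sub_mul, mul_assoc (adjoint (f j)), hff, mul_zero, sub_zero, hkfj]
    have h2 : f j * g j = -(f j) := by
      rw [e2, mul_sub, ← mul_assoc, hff, zero_mul, ← mul_assoc, hkfj, zero_sub]
    rw [h1, h2, neg_neg]
  -- g i commutes with products of g's
  have key : ∀ (ℓ : List (Fin N)) (i : Fin N),
      g i * (ℓ.map g).prod = (ℓ.map g).prod * g i := by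
    intro ℓ
    induction ℓ with
    | nil => intro i; simp
    | cons a t ih =>
      intro i
      simp only [List.map_cons, List.prod_cons]
      rw [← mul_assoc, hcomm i a, mul_assoc, ih i, ← mul_assoc]
  -- products of g's square to 1
  have keysq : ∀ ℓ : List (Fin N), (ℓ.map g).prod * (ℓ.map g).prod = 1 := by
    intro ℓ
    induction ℓ with
    | nil => simp
    | cons a t ih =>
      simp only [List.map_cons, List.prod_cons]
      rw [mul_assoc (g a) ((t.map g).prod), ← mul_assoc ((t.map g).prod) (g a),
        ← key t a, mul_assoc (g a) ((t.map g).prod), ih, mul_one]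
      exact hsq a
  -- products of g's are self-adjoint
  have keyadj : ∀ ℓ : List (Fin N), adjoint ((ℓ.map g).prod) = (ℓ.map g).prod := by
    intro ℓ
    induction ℓ with
    | nil => simp only [List.map_nil, List.prod_nil, ← star_eq_adjoint, star_one]
    | cons a t ih =>
      simp only [List.map_cons, List.prod_cons]
      rw [amul, ih, hadj a, ← key t a]
  -- products of g's anticommute with f j according to multiplicity
  have keyanti : ∀ (ℓ : List (Fin N)) (j : Fin N),
      (ℓ.map g).prod * f j
        = (-1 : H →ₗ[ℂ] H) ^ (ℓ.count j) * (f j * (ℓ.map g).prod) := by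
    intro ℓ
    induction ℓ with
    | nil => intro j; simp
    | cons a t ih =>
      intro j
      have hc : ∀ (c : ℕ) (w z : H →ₗ[ℂ] H),
          w * ((-1 : H →ₗ[ℂ] H) ^ c * z) = (-1 : H →ₗ[ℂ] H) ^ c * (w * z) := by
        intro c w z
        rw [← mul_assoc, ((Commute.neg_one_right w).pow_right c).eq, mul_assoc]
      simp only [List.map_cons, List.prod_cons]
      rw [mul_assoc, ih j, hc]
      rcases eq_or_ne a j with rfl | hne
      · rw [List.count_cons_self, ← mul_assoc (g a) (f a), hgfj a, neg_mul, mul_neg,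
          pow_succ, mul_assoc ((-1 : H →ₗ[ℂ] H) ^ (t.count a)), neg_one_mul,
          ← mul_assoc (f a), mul_neg]
      · rw [List.count_cons_of_ne hne, ← mul_assoc (g a) (f j), hgf a j hne,
          mul_assoc]
  -- conclude
  have hPm : P = ((List.finRange N).map g).prod := by rw [hP, List.ofFn_eq_map]
  refine ⟨?_, ?_, ?_⟩
  · rw [hPm]; exact keysq _
  · rw [hPm]; exact keyadj _
  · intro j
    rw [hPm, keyanti _ j,
      List.count_eq_one_of_mem (List.nodup_finRange N) (List.mem_finRange j),
      pow_one, neg_one_mul]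
end
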